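/- Let A be a commutative ring, p a prime number and d ∈ A. Assume that p is a nonzerodivisor on A, that d is a nonzerodivisor on A, and that the quotient ring A/dA is p-torsion-free. Then the commutative square of localization maps A → A[1/p], A → A[1/d], A[1/p] → A[1/(p·d)], A[1/d] → A[1/(p·d)] is Cartesian: the induced ring homomorphism A → A[1/p] ×_{A[1/(p·d)]} A[1/d] is bijective. Equivalently, A[1/p] ∩ A[1/d] = A inside A[1/(p·d)]. -/

import Mathlib

/-!
Let A be a commutative ring, p a prime and d ∈ A.  Assume p is a
nonzerodivisor on A, d is a nonzerodivisor on A, and A/dA is p-torsion-free.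
Then the square of localization maps A → A[1/p], A → A[1/d],
A[1/p] → A[1/(p·d)], A[1/d] → A[1/(p·d)] is Cartesian: the induced map
A → A[1/p] ×_{A[1/(p·d)]} A[1/d] is bijective; equivalently
A[1/p] ∩ A[1/d] = A inside A[1/(p·d)].

The two maps from the localizations to A[1/(p·d)] are the (unique) ring
homomorphisms g₁, g₂ compatible with the localization maps from A.
-/

theorem transversal_prism_localization_intersection
    {A : Type*} [CommRing A] (p : ℕ) (hp : p.Prime) (d : A)
    (hpA : (p : A) ∈ nonZeroDivisors A) (hdA : d ∈ nonZeroDivisors A)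
    (htf : ∀ x : A, (p : A) * x ∈ Ideal.span {d} → x ∈ Ideal.span {d})
    (g₁ : Localization.Away (p : A) →+* Localization.Away ((p : A) * d))
    (g₂ : Localization.Away d →+* Localization.Away ((p : A) * d))
    (hg₁ : g₁.comp (algebraMap A (Localization.Away (p : A))) =
      algebraMap A (Localization.Away ((p : A) * d)))
    (hg₂ : g₂.comp (algebraMap A (Localization.Away d)) =
      algebraMap A (Localization.Away ((p : A) * d))) :
    Function.Bijective (fun a : A =>
      (⟨(algebraMap A (Localization.Away (p : A)) a,
         algebraMap A (Localization.Away d) a),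
        by exact (RingHom.congr_fun hg₁ a).trans (RingHom.congr_fun hg₂ a).symm⟩ :
        {xy : Localization.Away (p : A) × Localization.Away d //
          g₁ xy.1 = g₂ xy.2})) := by
  have hpd : (p : A) * d ∈ nonZeroDivisors A := mul_mem hpA hdA
  have hle : Submonoid.powers ((p:A) * d) ≤ nonZeroDivisors A := by
    rintro y ⟨n, rfl⟩; exact pow_mem hpd n
  have hinj : Function.Injective (algebraMap A (Localization.Away ((p:A)*d))) :=
    IsLocalization.injective _ hle
  have hlep : Submonoid.powers ((p:A)) ≤ nonZeroDivisors A := by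
    rintro y ⟨n, rfl⟩; exact pow_mem hpA n
  have hinjp : Function.Injective (algebraMap A (Localization.Away ((p:A)))) :=
    IsLocalization.injective _ hlep
  -- p-torsion-freeness of A/(d^m)
  have L1 : ∀ (m : ℕ) (x : A), (p:A) * x ∈ Ideal.span {d^m} → x ∈ Ideal.span {d^m} := by
    intro m
    induction m with
    | zero => intro x _; simp [Ideal.span_singleton_one]
    | succ m ih =>
      intro x hx
      rw [Ideal.mem_span_singleton] at hx ⊢
      obtain ⟨y, hy⟩ := hx
      have hx1 : x ∈ Ideal.span {d} := by
        apply htf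
        rw [Ideal.mem_span_singleton]
        exact ⟨d^m * y, by rw [hy]; ring⟩
      rw [Ideal.mem_span_singleton] at hx1
      obtain ⟨x', rfl⟩ := hx1
      have h2 : d * ((p:A) * x') = d * (d^m * y) := by
        linear_combination hy
      have h3 : (p:A) * x' = d^m * y :=
        (mul_cancel_left_mem_nonZeroDivisors hdA).mp h2
      have h4 : x' ∈ Ideal.span {d^m} := by
        apply ih
        rw [Ideal.mem_span_singleton]
        exact ⟨y, h3⟩
      rw [Ideal.mem_span_singleton] at h4
      obtain ⟨z, hz⟩ := h4
      exact ⟨z, by rw [hz]; ring⟩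
  have L2 : ∀ (n m : ℕ) (x : A), (p:A)^n * x ∈ Ideal.span {d^m} → x ∈ Ideal.span {d^m} := by
    intro n m
    induction n with
    | zero => intro x hx; simpa using hx
    | succ n ih =>
      intro x hx
      apply ih
      apply L1
      have : (p:A) * ((p:A)^n * x) = (p:A)^(n+1) * x := by ring
      rw [this]; exact hx
  constructor
  · intro a b hab
    apply hinjp
    exact congrArg (fun z => (Subtype.val z).1) hab
  · rintro ⟨⟨x, y⟩, hxy⟩
    obtain ⟨⟨a, s⟩, hx⟩ := IsLocalization.mk'_surjective (Submonoid.powers ((p:A))) x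
    dsimp only at hx
    obtain ⟨⟨b, t⟩, hy⟩ := IsLocalization.mk'_surjective (Submonoid.powers d) y
    dsimp only at hy
    obtain ⟨n, hn⟩ := s.2
    obtain ⟨m, hm⟩ := t.2
    -- key identities in Away (p*d)
    have hx' : x * algebraMap A (Localization.Away ((p:A))) (s : A)
        = algebraMap A (Localization.Away ((p:A))) a := by
      rw [← hx]; exact IsLocalization.mk'_spec _ a s
    have hy' : y * algebraMap A (Localization.Away d) (t : A)
        = algebraMap A (Localization.Away d) b := by
      rw [← hy]; exact IsLocalization.mk'_spec _ b t
    have e1 : g₁ x * algebraMap A (Localization.Away ((p:A)*d)) (s : A)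
        = algebraMap A (Localization.Away ((p:A)*d)) a := by
      have hgc : ∀ r : A, g₁ (algebraMap A (Localization.Away ((p:A))) r)
          = algebraMap A (Localization.Away ((p:A)*d)) r := fun r => by
        simpa using RingHom.congr_fun hg₁ r
      have := congrArg g₁ hx'
      rwa [map_mul, hgc, hgc] at this
    have e2 : g₂ y * algebraMap A (Localization.Away ((p:A)*d)) (t : A)
        = algebraMap A (Localization.Away ((p:A)*d)) b := by
      have hgc : ∀ r : A, g₂ (algebraMap A (Localization.Away d) r)
          = algebraMap A (Localization.Away ((p:A)*d)) r := fun r => by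
        simpa using RingHom.congr_fun hg₂ r
      have := congrArg g₂ hy'
      rwa [map_mul, hgc, hgc] at this
    have hn' : ((p:A))^n = (s : A) := hn
    have hm' : d^m = (t : A) := hm
    have key : a * (t : A) = b * (s : A) := by
      apply hinj
      rw [map_mul, map_mul, ← e1, ← e2, hxy]
      ring
    -- b ∈ (d^m)
    have hb : b ∈ Ideal.span {d^m} := by
      apply L2 n
      rw [Ideal.mem_span_singleton]
      refine ⟨a, ?_⟩
      rw [← hn', ← hm'] at key
      linear_combination -key
    rw [Ideal.mem_span_singleton] at hb
    obtain ⟨c, hc⟩ := hb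
    -- a = p^n * c
    have ha : a = (p:A)^n * c := by
      have : d^m * a = d^m * ((p:A)^n * c) := by
        rw [← hn', ← hm'] at key
        calc d^m * a = a * d^m := by ring
        _ = b * (p:A)^n := key
        _ = d^m * c * (p:A)^n := by rw [hc]
        _ = d^m * ((p:A)^n * c) := by ring
      exact (mul_cancel_left_mem_nonZeroDivisors (pow_mem hdA m)).mp this
    refine ⟨c, ?_⟩
    apply Subtype.ext
    apply Prod.ext
    · show algebraMap A (Localization.Away ((p:A))) c = x
      rw [← hx]
      rw [IsLocalization.eq_mk'_iff_mul_eq]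
      rw [← map_mul]
      congr 1
      rw [← hn', ha]; ring
    · show algebraMap A (Localization.Away d) c = y
      rw [← hy]
      rw [IsLocalization.eq_mk'_iff_mul_eq]
      rw [← map_mul]
      congr 1
      rw [← hm', hc]; ring
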